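/- Let P_3(x,λ) = ((−3/4)x+3/8)λ³ + ((15/8)x² − (3/4)x)λ² + ((3/4)x⁵ − (15/8)x⁴)λ + (−(3/8)x⁶ + (3/4)x⁵). Then with α = 1/(1−2x) and x ≠ 1/2, the depressed cubic obtained from P_3/((−3/4)x+3/8) by the substitution λ ↦ λ* − ((−5/6+α/6)x) has discriminant Δ = (q/2)² + (p/3)³ = (1/432)·x⁸·α⁴·(−256(x−1)⁸); in particular Δ < 0 for all real x ∉ {0, 1, 1/2}. -/

import Mathlib

/-- For `x ≠ 1/2`, letting `α = 1/(1-2x)` and `a₂, a₁, a₀` be the coefficients of the monic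
cubic in `λ` obtained by dividing `P₃(x,λ)` by its leading coefficient `(-3/4)x + 3/8`, the
depressed cubic obtained by the substitution `λ ↦ λ* - a₂/3` has coefficients
`p = a₁ - a₂²/3`, `q = a₀ - a₁a₂/3 + 2a₂³/27`, and discriminant
`Δ = (q/2)² + (p/3)³ = (1/432)·x⁸·α⁴·(-256(x-1)⁸)`; in particular `Δ < 0` for
`x ∉ {0, 1, 1/2}`. -/
theorem keyPolynomial_three_depressed_discriminant (x : ℝ) (hx : x ≠ 1 / 2)
    (α a2 a1 a0 p q Δ : ℝ)
    (hα : α = 1 / (1 - 2 * x))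
    (ha2 : a2 = (15 / 8 * x ^ 2 - 3 / 4 * x) / (-(3 / 4) * x + 3 / 8))
    (ha1 : a1 = (3 / 4 * x ^ 5 - 15 / 8 * x ^ 4) / (-(3 / 4) * x + 3 / 8))
    (ha0 : a0 = (-(3 / 8) * x ^ 6 + 3 / 4 * x ^ 5) / (-(3 / 4) * x + 3 / 8))
    (hp : p = a1 - a2 ^ 2 / 3)
    (hq : q = a0 - a1 * a2 / 3 + 2 * a2 ^ 3 / 27)
    (hΔ : Δ = (q / 2) ^ 2 + (p / 3) ^ 3) :
    Δ = 1 / 432 * x ^ 8 * α ^ 4 * (-256 * (x - 1) ^ 8)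
      ∧ (x ≠ 0 → x ≠ 1 → Δ < 0) := by
  have hd : (1 : ℝ) - 2 * x ≠ 0 := by
    intro h; apply hx; linarith
  have hlead : (-(3 / 4) * x + 3 / 8 : ℝ) ≠ 0 := by
    intro h; apply hd; linarith
  have ha2' : a2 = (5 * x ^ 2 - 2 * x) * α := by
    rw [ha2, hα]; rw [div_eq_iff hlead]; field_simp; rw [eq_div_iff (by contrapose! hd; linarith)]; ring
  have ha1' : a1 = (2 * x ^ 5 - 5 * x ^ 4) * α := by
    rw [ha1, hα]; rw [div_eq_iff hlead]; field_simp; rw [eq_div_iff (by contrapose! hd; linarith)]; ring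
  have ha0' : a0 = (-x ^ 6 + 2 * x ^ 5) * α := by
    rw [ha0, hα]; rw [div_eq_iff hlead]; field_simp; rw [eq_div_iff (by contrapose! hd; linarith)]; ring
  have hrel : α * (1 - 2 * x) = 1 := by
    rw [hα]; field_simp
  have hmain : Δ = 1 / 432 * x ^ 8 * α ^ 4 * (-256 * (x - 1) ^ 8) := by
    rw [hΔ, hp, hq, ha0', ha1', ha2', hα]
    field_simp
    rw [neg_div', div_eq_div_iff (pow_ne_zero _ (by contrapose! hd; linarith)) (pow_ne_zero _ (by contrapose! hd; linarith))]
    ring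
  refine ⟨hmain, fun hx0 hx1 => ?_⟩
  rw [hmain]
  have hα0 : α ≠ 0 := by
    intro h; rw [h] at hrel; simp at hrel
  have h1 : (0:ℝ) < x ^ 8 := by positivity
  have h2 : (0:ℝ) < α ^ 4 := by positivity
  have h3 : (0:ℝ) < (x - 1) ^ 8 := by
    have : x - 1 ≠ 0 := sub_ne_zero.mpr hx1
    positivity
  nlinarith [mul_pos (mul_pos h1 h2) h3]
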